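/- Let A and B be positive definite real d×d matrices, let G = A^{−1}#B, and define X(t) = (tG + (1−t)I) A (tG + (1−t)I) for t ∈ ℝ. Then X(0) = A, X(1) = B, and for all t, X(t) = (1−t)² A + t² B + t(1−t)(A·G + G·A). (Since A·G and G·A are square roots of AB and BA respectively, this is the Bures–Wasserstein geodesic formula X(t) = (1−t)²A + t²B + t(1−t)((AB)^{1/2} + (BA)^{1/2}).) -/

import Mathlib

open Matrix
open scoped Classical

/-- The positive semidefinite square root, extended by `0` to all matrices. -/
noncomputable def msqrt {d : ℕ} (M : Matrix (Fin d) (Fin d) ℝ) : Matrix (Fin d) (Fin d) ℝ :=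
  if h : M.PosSemidef then
    (h.1.eigenvectorUnitary : Matrix (Fin d) (Fin d) ℝ) *
      diagonal ((RCLike.ofReal : ℝ → ℝ) ∘ (Real.sqrt ·) ∘ h.1.eigenvalues) *
      (star h.1.eigenvectorUnitary : Matrix (Fin d) (Fin d) ℝ)
  else 0

/-- The geometric mean `A # B = A^{1/2} (A^{-1/2} B A^{-1/2})^{1/2} A^{1/2}` of positive
definite matrices. -/
noncomputable def geoMean {d : ℕ} (A B : Matrix (Fin d) (Fin d) ℝ) :
    Matrix (Fin d) (Fin d) ℝ :=
  msqrt A * msqrt ((msqrt A)⁻¹ * B * (msqrt A)⁻¹) * msqrt A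

noncomputable def Matrix.PosSemidef.sqrt {d : ℕ} {M : Matrix (Fin d) (Fin d) ℝ}
    (h : M.PosSemidef) : Matrix (Fin d) (Fin d) ℝ :=
  (h.1.eigenvectorUnitary : Matrix (Fin d) (Fin d) ℝ) *
    diagonal ((RCLike.ofReal : ℝ → ℝ) ∘ (Real.sqrt ·) ∘ h.1.eigenvalues) *
    (star h.1.eigenvectorUnitary : Matrix (Fin d) (Fin d) ℝ)

lemma Matrix.PosSemidef.sqrt_mul_self {d : ℕ} {M : Matrix (Fin d) (Fin d) ℝ}
    (h : M.PosSemidef) : h.sqrt * h.sqrt = M := by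
  have hu := Unitary.coe_star_mul_self h.1.eigenvectorUnitary
  set U : Matrix (Fin d) (Fin d) ℝ := (h.1.eigenvectorUnitary : Matrix (Fin d) (Fin d) ℝ)
  set V : Matrix (Fin d) (Fin d) ℝ := (star h.1.eigenvectorUnitary : Matrix (Fin d) (Fin d) ℝ)
  set D := diagonal ((RCLike.ofReal : ℝ → ℝ) ∘ (Real.sqrt ·) ∘ h.1.eigenvalues)
  have hM : M = U * diagonal ((RCLike.ofReal : ℝ → ℝ) ∘ h.1.eigenvalues) * V := by
    conv_lhs => rw [h.1.spectral_theorem, Unitary.conjStarAlgAut_apply]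
  calc h.sqrt * h.sqrt = U * (D * (V * U) * D) * V := by
        simp only [Matrix.PosSemidef.sqrt]; noncomm_ring
    _ = U * diagonal ((RCLike.ofReal : ℝ → ℝ) ∘ h.1.eigenvalues) * V := by
        rw [hu, mul_one, diagonal_mul_diagonal]
        refine congrArg (fun x => U * x * V) (congrArg diagonal (funext fun i => ?_))
        simp [Real.mul_self_sqrt (h.eigenvalues_nonneg i)]
    _ = M := hM.symm

lemma Matrix.PosSemidef.posSemidef_sqrt {d : ℕ} {M : Matrix (Fin d) (Fin d) ℝ}
    (h : M.PosSemidef) : h.sqrt.PosSemidef := by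
  have hD : (diagonal ((RCLike.ofReal : ℝ → ℝ) ∘ (Real.sqrt ·) ∘ h.1.eigenvalues)).PosSemidef :=
    posSemidef_diagonal_iff.mpr (fun i => by simp [Real.sqrt_nonneg])
  have := hD.mul_mul_conjTranspose_same
    (h.1.eigenvectorUnitary : Matrix (Fin d) (Fin d) ℝ)
  rw [Matrix.PosSemidef.sqrt, star_eq_conjTranspose]
  exact this

lemma msqrt_of_psd {d : ℕ} {M : Matrix (Fin d) (Fin d) ℝ} (h : M.PosSemidef) :
    msqrt M = h.sqrt := by
  simp [msqrt, h]; rfl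

/-- Key fact: `G A G = B` for `G = A⁻¹ # B`. -/
lemma geoMean_mul_A_mul {d : ℕ} (A B : Matrix (Fin d) (Fin d) ℝ)
    (hA : A.PosDef) (hB : B.PosDef) :
    geoMean A⁻¹ B * A * geoMean A⁻¹ B = B := by
  have hAinv : A⁻¹.PosDef := hA.inv
  set T : Matrix (Fin d) (Fin d) ℝ := msqrt A⁻¹ with hT
  have hTsq : T * T = A⁻¹ := by
    rw [hT, msqrt_of_psd hAinv.posSemidef]
    exact hAinv.posSemidef.sqrt_mul_self
  have hTpsd : T.PosSemidef := by
    rw [hT, msqrt_of_psd hAinv.posSemidef]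
    exact hAinv.posSemidef.posSemidef_sqrt
  have hAdet : IsUnit A.det := isUnit_iff_ne_zero.mpr hA.det_pos.ne'
  have hAinvdet : IsUnit A⁻¹.det := isUnit_iff_ne_zero.mpr hAinv.det_pos.ne'
  have hTdet : IsUnit T.det := by
    have : T.det * T.det = A⁻¹.det := by rw [← det_mul, hTsq]
    exact isUnit_of_mul_isUnit_left (this ▸ hAinvdet)
  have hTinv : T * T⁻¹ = 1 := mul_nonsing_inv T hTdet
  have hTinv' : T⁻¹ * T = 1 := nonsing_inv_mul T hTdet
  -- C is PSD
  have hTinvH : (T⁻¹)ᴴ = T⁻¹ := by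
    rw [conjTranspose_nonsing_inv, hTpsd.1]
  have hC : (T⁻¹ * B * T⁻¹).PosSemidef := by
    have := hB.posSemidef.conjTranspose_mul_mul_same T⁻¹
    rwa [hTinvH] at this
  set S : Matrix (Fin d) (Fin d) ℝ := msqrt (T⁻¹ * B * T⁻¹) with hS
  have hSsq : S * S = T⁻¹ * B * T⁻¹ := by
    rw [hS, msqrt_of_psd hC]
    exact hC.sqrt_mul_self
  -- T commutes with A
  have hcomm : T * A⁻¹ = A⁻¹ * T := by rw [← hTsq]; noncomm_ring
  have hTAT : T * A * T = 1 := by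
    have h1 : A * T = T * A := by
      have h2 : A * (T * A⁻¹) * A = A * (A⁻¹ * T) * A := by rw [hcomm]
      rw [show A * (T * A⁻¹) * A = A * T * (A⁻¹ * A) by noncomm_ring,
        show A * (A⁻¹ * T) * A = (A * A⁻¹) * (T * A) by noncomm_ring,
        nonsing_inv_mul A hAdet, mul_nonsing_inv A hAdet, mul_one, one_mul] at h2
      exact h2
    calc T * A * T = T * T * A := by rw [mul_assoc, h1, mul_assoc]
      _ = 1 := by rw [hTsq, nonsing_inv_mul A hAdet]
  have hG : geoMean A⁻¹ B = T * S * T := rfl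
  rw [hG]
  calc T * S * T * A * (T * S * T)
      = T * S * (T * A * T) * S * T := by noncomm_ring
    _ = T * (S * S) * T := by rw [hTAT]; noncomm_ring
    _ = T * (T⁻¹ * B * T⁻¹) * T := by rw [hSsq]
    _ = (T * T⁻¹) * B * (T⁻¹ * T) := by noncomm_ring
    _ = B := by rw [hTinv, hTinv', one_mul, mul_one]

theorem bw_geodesic_formula {d : ℕ} (A B : Matrix (Fin d) (Fin d) ℝ)
    (hA : A.PosDef) (hB : B.PosDef) :
    (fun t : ℝ => (t • geoMean A⁻¹ B + (1 - t) • (1 : Matrix (Fin d) (Fin d) ℝ)) * A *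
        (t • geoMean A⁻¹ B + (1 - t) • (1 : Matrix (Fin d) (Fin d) ℝ))) 0 = A ∧
    (fun t : ℝ => (t • geoMean A⁻¹ B + (1 - t) • (1 : Matrix (Fin d) (Fin d) ℝ)) * A *
        (t • geoMean A⁻¹ B + (1 - t) • (1 : Matrix (Fin d) (Fin d) ℝ))) 1 = B ∧
    ∀ t : ℝ,
      (t • geoMean A⁻¹ B + (1 - t) • (1 : Matrix (Fin d) (Fin d) ℝ)) * A *
          (t • geoMean A⁻¹ B + (1 - t) • (1 : Matrix (Fin d) (Fin d) ℝ)) =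
        (1 - t) ^ 2 • A + t ^ 2 • B +
          (t * (1 - t)) • (A * geoMean A⁻¹ B + geoMean A⁻¹ B * A) := by
  have key := geoMean_mul_A_mul A B hA hB
  have main : ∀ t : ℝ,
      (t • geoMean A⁻¹ B + (1 - t) • (1 : Matrix (Fin d) (Fin d) ℝ)) * A *
          (t • geoMean A⁻¹ B + (1 - t) • (1 : Matrix (Fin d) (Fin d) ℝ)) =
        (1 - t) ^ 2 • A + t ^ 2 • B +
          (t * (1 - t)) • (A * geoMean A⁻¹ B + geoMean A⁻¹ B * A) := by
    intro t
    set G := geoMean A⁻¹ B with hG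
    rw [← key]
    simp only [add_mul, mul_add, smul_mul_assoc, mul_smul_comm, smul_smul, one_mul, mul_one,
      smul_add]
    module
  refine ⟨?_, ?_, main⟩
  · simp only [main 0]; simp
  · simpa using main 1
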